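/- Let A ∈ ℂ^{n×n}, λ an eigenvalue, and let u₁,…,u_p and v₁,…,v_q be left and right Jordan chains for λ with p and q both odd. Then u_i*v_j = 0, u_{(p+1)/2}*v_j = 0, and u_i*v_{(q+1)/2} = 0 for all 1 ≤ i ≤ (p−1)/2 and 1 ≤ j ≤ (q−1)/2. -/

import Mathlib

open Matrix

/-- Corollary (odd case): for `p`, `q` odd, `uᵢ* vⱼ = 0`,
`u_{(p+1)/2}* vⱼ = 0` and `uᵢ* v_{(q+1)/2} = 0` for
`1 ≤ i ≤ (p-1)/2`, `1 ≤ j ≤ (q-1)/2`. -/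
theorem biorthogonality_odd {n p q : ℕ}
    (A : Matrix (Fin n) (Fin n) ℂ) (lam : ℂ)
    (u v : ℕ → Fin n → ℂ)
    (hpo : Odd p) (hqo : Odd q)
    (hu0 : u 1 ≠ 0) (hv0 : v 1 ≠ 0)
    (hu1 : Matrix.vecMul (star (u 1)) A = lam • star (u 1))
    (huS : ∀ i, 1 ≤ i → i + 1 ≤ p →
      Matrix.vecMul (star (u (i + 1))) A = lam • star (u (i + 1)) + star (u i))
    (hv1 : A.mulVec (v 1) = lam • v 1)
    (hvS : ∀ j, 1 ≤ j → j + 1 ≤ q →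
      A.mulVec (v (j + 1)) = lam • v (j + 1) + v j) :
    (∀ i j, 1 ≤ i → 2 * i + 1 ≤ p → 1 ≤ j → 2 * j + 1 ≤ q →
        dotProduct (star (u i)) (v j) = 0) ∧
    (∀ j, 1 ≤ j → 2 * j + 1 ≤ q →
        dotProduct (star (u ((p + 1) / 2))) (v j) = 0) ∧
    (∀ i, 1 ≤ i → 2 * i + 1 ≤ p →
        dotProduct (star (u i)) (v ((q + 1) / 2)) = 0) := by
  set f : ℕ → ℕ → ℂ := fun i j => dotProduct (star (u i)) (v j) with hf
  have key : ∀ i j, 1 ≤ i → i + 1 ≤ p → 1 ≤ j → j + 1 ≤ q →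
      f i (j + 1) = f (i + 1) j := by
    intro i j hi hip hj hjq
    have h1 : star (u (i+1)) ⬝ᵥ A.mulVec (v (j+1))
        = lam * f (i+1) (j+1) + f (i+1) j := by
      rw [hvS j hj hjq, dotProduct_add, dotProduct_smul]
      simp [f, smul_eq_mul]
    have h2 : star (u (i+1)) ⬝ᵥ A.mulVec (v (j+1))
        = lam * f (i+1) (j+1) + f i (j+1) := by
      rw [dotProduct_mulVec, huS i hi hip, add_dotProduct, smul_dotProduct]
      simp [f, smul_eq_mul]
    exact (add_left_cancel (h1.symm.trans h2)).symm
  have row1 : ∀ j, 1 ≤ j → j + 1 ≤ q → f 1 j = 0 := by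
    intro j hj hjq
    have h1 : star (u 1) ⬝ᵥ A.mulVec (v (j+1)) = lam * f 1 (j+1) + f 1 j := by
      rw [hvS j hj hjq, dotProduct_add, dotProduct_smul]
      simp [f, smul_eq_mul]
    have h2 : star (u 1) ⬝ᵥ A.mulVec (v (j+1)) = lam * f 1 (j+1) := by
      rw [dotProduct_mulVec, hu1, smul_dotProduct]
      simp [f, smul_eq_mul]
    exact left_eq_add.mp (h2.symm.trans h1)
  have col1 : ∀ i, 1 ≤ i → i + 1 ≤ p → f i 1 = 0 := by
    intro i hi hip
    have h1 : star (u (i+1)) ⬝ᵥ A.mulVec (v 1) = lam * f (i+1) 1 + f i 1 := by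
      rw [dotProduct_mulVec, huS i hi hip, add_dotProduct, smul_dotProduct]
      simp [f, smul_eq_mul]
    have h2 : star (u (i+1)) ⬝ᵥ A.mulVec (v 1) = lam * f (i+1) 1 := by
      rw [hv1, dotProduct_smul]
      simp [f, smul_eq_mul]
    exact left_eq_add.mp (h2.symm.trans h1)
  have lemA : ∀ j i, 1 ≤ i → 1 ≤ j → j ≤ q → i + j ≤ p → f i j = 0 := by
    intro j
    induction j with
    | zero => intro i _ h; omega
    | succ j ih =>
      intro i hi hj hjq hip
      rcases Nat.eq_zero_or_pos j with h0 | hjpos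
      · subst h0
        exact col1 i hi (by omega)
      · rw [key i j hi (by omega) hjpos (by omega)]
        exact ih (i + 1) (by omega) hjpos (by omega) (by omega)
  have lemB : ∀ i j, 1 ≤ i → 1 ≤ j → i ≤ p → i + j ≤ q → f i j = 0 := by
    intro i
    induction i with
    | zero => intro j _ h; omega
    | succ i ih =>
      intro j hi hj hip hjq
      rcases Nat.eq_zero_or_pos i with h0 | hipos
      · subst h0
        exact row1 j hj (by omega)
      · rw [← key i j hipos (by omega) hj (by omega)]
        exact ih (j + 1) hipos (by omega) (by omega) (by omega)
  obtain ⟨a, ha⟩ := hpo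
  obtain ⟨b, hb⟩ := hqo
  refine ⟨?_, ?_, ?_⟩
  · intro i j hi hip hj hjq
    rcases le_total p q with h | h
    · exact lemB i j hi hj (by omega) (by omega)
    · exact lemA j i hi hj (by omega) (by omega)
  · intro j hj hjq
    rcases le_total p q with h | h
    · exact lemB ((p + 1) / 2) j (by omega) hj (by omega) (by omega)
    · exact lemA j ((p + 1) / 2) (by omega) hj (by omega) (by omega)
  · intro i hi hip
    rcases le_total p q with h | h
    · exact lemB i ((q + 1) / 2) hi (by omega) (by omega) (by omega)
    · exact lemA ((q + 1) / 2) i hi (by omega) (by omega) (by omega)
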